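/- The brackets {ζ₁,ζ₂}=ζ₁ζ₂, {ζ₁,ζ₁*}=2(1+|ζ₁|²), {ζ₁,ζ₂*}=ζ₁ζ₂*, {ζ₂,ζ₂*}=-2(1+|ζ₁|²+|ζ₂|²) define a Poisson structure on ℝ⁴ ≅ ℂ² whose associated bivector is everywhere nondegenerate (i.e. the structure is symplectic). -/

import Mathlib

open MvPolynomial

private abbrev PP := MvPolynomial (Fin 2 ⊕ Fin 2) ℂ

theorem jacobi_of_gen (B : PP →ₗ[ℂ] PP →ₗ[ℂ] PP)
    (hA : ∀ f g, B f g = - B g f)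
    (hL : ∀ f g h, B (f * g) h = f * B g h + B f h * g)
    (hgen : ∀ u v w : Fin 2 ⊕ Fin 2,
      B (X u) (B (X v) (X w)) + B (X v) (B (X w) (X u)) + B (X w) (B (X u) (X v)) = 0) :
    ∀ f g h : PP, B f (B g h) + B g (B h f) + B h (B f g) = 0 := by
  have hL2 : ∀ f g h : PP, B f (g * h) = g * B f h + B f g * h := by
    intro f g h
    rw [hA f (g*h), hL, hA h f, hA g f]; ring
  have hB1 : ∀ h : PP, B 1 h = 0 := by
    intro h
    have h1 := hL 1 1 h
    rw [one_mul, one_mul, mul_one] at h1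
    exact (left_eq_add.mp h1)
  have hBC : ∀ (c : ℂ) (h : PP), B (C c) h = 0 := by
    intro c h
    have hc : (C c : PP) = c • 1 := by rw [smul_eq_C_mul, mul_one]
    rw [hc, map_smul, LinearMap.smul_apply, hB1, smul_zero]
  have hBC' : ∀ (c : ℂ) (h : PP), B h (C c) = 0 := by
    intro c h; rw [hA, hBC, neg_zero]
  -- Leibniz rule for the Jacobiator in its first slot
  have jleib : ∀ a b g h : PP,
      B (a*b) (B g h) + B g (B h (a*b)) + B h (B (a*b) g)
      = a * (B b (B g h) + B g (B h b) + B h (B b g))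
        + (B a (B g h) + B g (B h a) + B h (B a g)) * b := by
    intro a b g h
    rw [hA h (a*b)]
    simp only [hL, map_neg, map_add]
    simp only [hL2]
    simp only [hA b h, hA a h, hA a g, hA b g]
    simp only [map_neg]
    ring
  -- antisymmetry of the Jacobiator in its first two slots
  have jswap : ∀ f g h : PP,
      B f (B g h) + B g (B h f) + B h (B f g)
      = -(B g (B f h) + B f (B h g) + B h (B g f)) := by
    intro f g h
    rw [hA g h, hA h f, hA f g]
    simp only [map_neg]
    ring
  have A1 : ∀ (v w : Fin 2 ⊕ Fin 2) (f : PP),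
      B f (B (X v) (X w)) + B (X v) (B (X w) f) + B (X w) (B f (X v)) = 0 := by
    intro v w f
    induction f using MvPolynomial.induction_on with
    | C c => simp [hBC, hBC']
    | add p q hp hq =>
        simp only [map_add, LinearMap.add_apply]
        linear_combination hp + hq
    | mul_X p n hp =>
        linear_combination jleib p (X n) (X v) (X w) + p * hgen n v w + hp * X n
  have A2' : ∀ (w : Fin 2 ⊕ Fin 2) (g f : PP),
      B g (B f (X w)) + B f (B (X w) g) + B (X w) (B g f) = 0 := by
    intro w g f
    induction g using MvPolynomial.induction_on with
    | C c => simp [hBC, hBC']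
    | add p q hp hq =>
        simp only [map_add, LinearMap.add_apply]
        linear_combination hp + hq
    | mul_X p n hp =>
        have hx : B (X n) (B f (X w)) + B f (B (X w) (X n)) + B (X w) (B (X n) f) = 0 := by
          rw [jswap (X n) f (X w), A1 n w f, neg_zero]
        linear_combination jleib p (X n) f (X w) + p * hx + hp * X n
  have A2 : ∀ (w : Fin 2 ⊕ Fin 2) (f g : PP),
      B f (B g (X w)) + B g (B (X w) f) + B (X w) (B f g) = 0 := by
    intro w f g
    rw [jswap f g (X w), A2' w g f, neg_zero]
  intro f g h
  induction h using MvPolynomial.induction_on with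
  | C c => simp [hBC, hBC']
  | add p q hp hq =>
      simp only [map_add, LinearMap.add_apply]
      linear_combination hp + hq
  | mul_X p n hp =>
      linear_combination jleib p (X n) f g + p * A2 n f g + hp * X n



set_option maxHeartbeats 2000000 in
theorem test_part1
    (B : PP →ₗ[ℂ] PP →ₗ[ℂ] PP)
    (z w : Fin 2 → PP)
    (hz : ∀ i, z i = MvPolynomial.X (Sum.inl i))
    (hw : ∀ i, w i = MvPolynomial.X (Sum.inr i))
    (hA : ∀ f g, B f g = - B g f)
    (hL : ∀ f g h, B (f * g) h = f * B g h + B f h * g)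
    (e01 : B (z 0) (z 1) = z 0 * z 1)
    (e02 : B (z 0) (w 0) = 2 * (1 + z 0 * w 0))
    (e03 : B (z 0) (w 1) = z 0 * w 1)
    (e13 : B (z 1) (w 1) = -(2 * (1 + z 0 * w 0 + z 1 * w 1)))
    (e23 : B (w 0) (w 1) = -(w 0 * w 1))
    (e12 : B (z 1) (w 0) = w 0 * z 1) :
    ∀ f g h : PP, B f (B g h) + B g (B h f) + B h (B f g) = 0 := by
  simp only [hz, hw] at e01 e02 e03 e13 e23 e12
  have hL2 : ∀ f g h : PP, B f (g * h) = g * B f h + B f g * h := by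
    intro f g h
    rw [hA f (g*h), hL, hA h f, hA g f]; ring
  have hB1 : ∀ h : PP, B 1 h = 0 := by
    intro h
    have h1 := hL 1 1 h
    rw [one_mul, one_mul, mul_one] at h1
    exact (left_eq_add.mp h1)
  have hB1' : ∀ f : PP, B f 1 = 0 := by
    intro f; rw [hA, hB1, neg_zero]
  have hB2' : ∀ f : PP, B f (2 : PP) = 0 := by
    intro f
    have : (2 : PP) = 1 + 1 := by norm_num
    rw [this, map_add, hB1', add_zero]
  have hdiag : ∀ f : PP, B f f = 0 := by
    intro f
    have h2 : B f f + B f f = 0 := by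
      nth_rewrite 2 [hA f f]
      exact add_neg_cancel _
    have := add_self_eq_zero.mp h2
    exact this
  -- reversed table
  have e10 : B (X (Sum.inl 1)) (X (Sum.inl 0) : PP) = -(X (Sum.inl 0) * X (Sum.inl 1)) := by
    rw [hA, e01]
  have e20 : B (X (Sum.inr 0)) (X (Sum.inl 0) : PP) = -(2 * (1 + X (Sum.inl 0) * X (Sum.inr 0))) := by
    rw [hA, e02]
  have e30 : B (X (Sum.inr 1)) (X (Sum.inl 0) : PP) = -(X (Sum.inl 0) * X (Sum.inr 1)) := by
    rw [hA, e03]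
  have e31 : B (X (Sum.inr 1)) (X (Sum.inl 1) : PP) = 2 * (1 + X (Sum.inl 0) * X (Sum.inr 0) + X (Sum.inl 1) * X (Sum.inr 1)) := by
    rw [hA, e13, neg_neg]
  have e32 : B (X (Sum.inr 1)) (X (Sum.inr 0) : PP) = X (Sum.inr 0) * X (Sum.inr 1) := by
    rw [hA, e23, neg_neg]
  have e21 : B (X (Sum.inr 0)) (X (Sum.inl 1) : PP) = -(X (Sum.inr 0) * X (Sum.inl 1)) := by
    rw [hA, e12]
  have hgen : ∀ u v w : Fin 2 ⊕ Fin 2,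
      B (X u) (B (X v) (X w)) + B (X v) (B (X w) (X u)) + B (X w) (B (X u) (X v)) = 0 := by
    intro u v w
    rcases u with u | u <;> rcases v with v | v <;> rcases w with w | w <;>
      fin_cases u <;> fin_cases v <;> fin_cases w <;>
      · simp only [Fin.mk_zero, Fin.mk_one, Fin.isValue, hdiag, e01, e02, e03, e13, e23, e12, e10, e20, e30, e31, e32,
          e21, hL2, map_add, map_neg, map_zero, hB1', hB2', hB1]
        ring
  exact jacobi_of_gen B hA hL hgen

theorem test_part2 : (∀ ζ₁ ζ₂ : ℂ,
      (!![0, ζ₁ * ζ₂, 2 * (1 + ζ₁ * star ζ₁), ζ₁ * star ζ₂;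
          -(ζ₁ * ζ₂), 0, star ζ₁ * ζ₂, -(2 * (1 + ζ₁ * star ζ₁ + ζ₂ * star ζ₂));
          -(2 * (1 + ζ₁ * star ζ₁)), -(star ζ₁ * ζ₂), 0, -(star ζ₁ * star ζ₂);
          -(ζ₁ * star ζ₂), 2 * (1 + ζ₁ * star ζ₁ + ζ₂ * star ζ₂), star ζ₁ * star ζ₂, 0]
        : Matrix (Fin 4) (Fin 4) ℂ).det ≠ 0) := by
  intro ζ₁ ζ₂
  have h1 : (1 + ζ₁ * star ζ₁ : ℂ) ≠ 0 := by
    simp only [Complex.star_def, Complex.mul_conj]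
    intro h
    have h' : (1 + Complex.normSq ζ₁ : ℝ) = 0 := by exact_mod_cast h
    nlinarith [Complex.normSq_nonneg ζ₁]
  have h2 : (1 + ζ₁ * star ζ₁ + ζ₂ * star ζ₂ : ℂ) ≠ 0 := by
    simp only [Complex.star_def, Complex.mul_conj]
    intro h
    have h' : (1 + Complex.normSq ζ₁ + Complex.normSq ζ₂ : ℝ) = 0 := by exact_mod_cast h
    nlinarith [Complex.normSq_nonneg ζ₁, Complex.normSq_nonneg ζ₂]
  have hdet :
      (!![0, ζ₁ * ζ₂, 2 * (1 + ζ₁ * star ζ₁), ζ₁ * star ζ₂;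
          -(ζ₁ * ζ₂), 0, star ζ₁ * ζ₂, -(2 * (1 + ζ₁ * star ζ₁ + ζ₂ * star ζ₂));
          -(2 * (1 + ζ₁ * star ζ₁)), -(star ζ₁ * ζ₂), 0, -(star ζ₁ * star ζ₂);
          -(ζ₁ * star ζ₂), 2 * (1 + ζ₁ * star ζ₁ + ζ₂ * star ζ₂), star ζ₁ * star ζ₂, 0]
        : Matrix (Fin 4) (Fin 4) ℂ).det
      = 16 * (1 + ζ₁ * star ζ₁)^2 * (1 + ζ₁ * star ζ₁ + ζ₂ * star ζ₂)^2 := by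
    simp [Matrix.det_succ_row_zero, Fin.sum_univ_succ, Fin.succAbove, Fin.castSucc, Fin.castAdd, Fin.castLE, Matrix.cons_val_zero, Matrix.cons_val_one, Matrix.head_cons]
    ring
  rw [hdet]
  exact mul_ne_zero (mul_ne_zero (by norm_num) (pow_ne_zero _ h1)) (pow_ne_zero _ h2)

/-- The brackets `{ζ₁,ζ₂}=ζ₁ζ₂`, `{ζ₁,ζ₁*}=2(1+|ζ₁|²)`, `{ζ₁,ζ₂*}=ζ₁ζ₂*`,
`{ζ₂,ζ₂*}=-2(1+|ζ₁|²+|ζ₂|²)` (extended by Leibniz, antisymmetry and the reality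
condition `{f*,g*} = -{f,g}*`) define a Poisson structure on ℝ⁴ ≅ ℂ²: the
bracket satisfies the Jacobi identity, and the associated bivector, i.e. the
matrix of brackets of the coordinates `(ζ₁,ζ₂,ζ₁*,ζ₂*)`, is everywhere
nondegenerate, so the structure is symplectic. -/
theorem stereographic_poisson_symplectic :
    (∀ (B : MvPolynomial (Fin 2 ⊕ Fin 2) ℂ →ₗ[ℂ]
            MvPolynomial (Fin 2 ⊕ Fin 2) ℂ →ₗ[ℂ] MvPolynomial (Fin 2 ⊕ Fin 2) ℂ)
       (z w : Fin 2 → MvPolynomial (Fin 2 ⊕ Fin 2) ℂ),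
      (∀ i, z i = MvPolynomial.X (Sum.inl i)) →
      (∀ i, w i = MvPolynomial.X (Sum.inr i)) →
      (∀ f g, B f g = - B g f) →
      (∀ f g h, B (f * g) h = f * B g h + B f h * g) →
      B (z 0) (z 1) = z 0 * z 1 →
      B (z 0) (w 0) = 2 * (1 + z 0 * w 0) →
      B (z 0) (w 1) = z 0 * w 1 →
      B (z 1) (w 1) = -(2 * (1 + z 0 * w 0 + z 1 * w 1)) →
      B (w 0) (w 1) = -(w 0 * w 1) →
      B (z 1) (w 0) = w 0 * z 1 →
      ∀ f g h, B f (B g h) + B g (B h f) + B h (B f g) = 0) ∧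
    (∀ ζ₁ ζ₂ : ℂ,
      (!![0, ζ₁ * ζ₂, 2 * (1 + ζ₁ * star ζ₁), ζ₁ * star ζ₂;
          -(ζ₁ * ζ₂), 0, star ζ₁ * ζ₂, -(2 * (1 + ζ₁ * star ζ₁ + ζ₂ * star ζ₂));
          -(2 * (1 + ζ₁ * star ζ₁)), -(star ζ₁ * ζ₂), 0, -(star ζ₁ * star ζ₂);
          -(ζ₁ * star ζ₂), 2 * (1 + ζ₁ * star ζ₁ + ζ₂ * star ζ₂), star ζ₁ * star ζ₂, 0]
        : Matrix (Fin 4) (Fin 4) ℂ).det ≠ 0) := by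
  constructor
  · intro B z w hz hw hA hL e01 e02 e03 e13 e23 e12
    exact test_part1 B z w hz hw hA hL e01 e02 e03 e13 e23 e12
  · exact test_part2
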